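/- Let A ≤ 𝕂ˣ for a field 𝕂 of characteristic 0, and let G be a finite group with Hom(G,A) finite. For a subgroup K ≤ G and an element g ∈ G, the evaluation character ε_g : Hom(G,A) → 𝕂ˣ, ε_g(φ) = φ(g), is trivial on K^⊥ = {φ ∈ Hom(G,A) | φ|_K = 1} if and only if g ∈ K·O(G), where O(G) = ⋂_{φ ∈ Hom(G,A)} ker φ. -/

import Mathlib

open scoped Pointwise
open scoped commutatorElement

theorem stmt_10 {𝕂 : Type*} [Field 𝕂] [CharZero 𝕂] (A : Subgroup 𝕂ˣ)
    (G : Type*) [Group G] [Finite G] [Finite (G →* ↥A)]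
    (K : Subgroup G) (g : G) :
    (∀ φ : G →* ↥A, (∀ k ∈ K, φ k = 1) → ((φ g : ↥A) : 𝕂ˣ) = 1) ↔
      ∃ k ∈ K, k⁻¹ * g ∈ ⨅ φ : G →* ↥A, φ.ker := by
  classical
  set O : Subgroup G := ⨅ φ : G →* ↥A, φ.ker with hO
  constructor
  · intro h
    by_contra hcon
    -- commutators lie in O
    have hOcomm : ∀ a b : G, ⁅a, b⁆ ∈ O := by
      intro a b
      refine Subgroup.mem_iInf.mpr fun φ => ?_
      rw [MonoidHom.mem_ker, map_commutatorElement, commutatorElement_eq_one_iff_commute]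
      exact mul_comm _ _
    set M : Subgroup G := K ⊔ O with hM
    have hOM : O ≤ M := le_sup_right
    haveI hMnormal : M.Normal := by
      constructor
      intro m hm x
      have hx : x * m * x⁻¹ = ⁅x, m⁆ * m := by group
      rw [hx]
      exact mul_mem (hOM (hOcomm x m)) hm
    letI : CommGroup (G ⧸ M) :=
      { (inferInstance : Group (G ⧸ M)) with
        mul_comm := by
          intro x y
          induction x using QuotientGroup.induction_on with
          | H a =>
          induction y using QuotientGroup.induction_on with
          | H b =>
          rw [← QuotientGroup.mk_mul, ← QuotientGroup.mk_mul]
          refine (QuotientGroup.eq (s := M)).mpr ?_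
          have : (a * b)⁻¹ * (b * a) = ⁅b⁻¹, a⁻¹⁆ := by group
          rw [this]
          exact hOM (hOcomm _ _) }
    haveI hOnormal : O.Normal := by
      constructor
      intro m hm x
      refine Subgroup.mem_iInf.mpr fun φ => ?_
      have := Subgroup.mem_iInf.mp hm φ
      rw [MonoidHom.mem_ker] at this ⊢
      simp [this]
    set e : ℕ := Monoid.exponent (G ⧸ O) with he
    haveI : NeZero e := ⟨Monoid.exponent_ne_zero_of_finite⟩
    have hepos : 0 < e := Nat.pos_of_ne_zero (NeZero.ne e)
    -- for every g and φ, (φ g)^e = 1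
    have hkey : ∀ (x : G) (φ : G →* ↥A), (φ x) ^ e = 1 := by
      intro x φ
      have h1 : ((x : G ⧸ O)) ^ e = 1 := Monoid.pow_exponent_eq_one _
      have h2 : x ^ e ∈ O := by
        rwa [← QuotientGroup.eq_one_iff, QuotientGroup.mk_pow]
      have := Subgroup.mem_iInf.mp h2 φ
      rwa [MonoidHom.mem_ker, map_pow] at this
    -- torsion subgroup T of A
    set T : Subgroup ↥A := (powMonoidHom e : ↥A →* ↥A).ker with hT
    have hmemT : ∀ a : ↥A, a ∈ T ↔ a ^ e = 1 := by
      intro a; rw [hT, MonoidHom.mem_ker, powMonoidHom_apply]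
    -- T is finite
    have hfinT : Finite ↥T := by
      have : Function.Injective
          (fun t : ↥T => (⟨((((t : ↥A) : 𝕂ˣ) : 𝕂)), by
            rw [Polynomial.mem_nthRoots hepos]
            have ht : (t : ↥A) ^ e = 1 := (hmemT _).mp t.2
            have : (((t : ↥A) : 𝕂ˣ) : 𝕂) ^ e = 1 := by
              rw [← Units.val_pow_eq_pow_val, ← Subgroup.coe_pow, ht]; simp
            exact this⟩ : {x : 𝕂 // x ∈ Polynomial.nthRoots e (1 : 𝕂)})) := by
        intro s t hst
        ext
        exact congrArg Subtype.val hst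
      haveI : Finite {x : 𝕂 // x ∈ Polynomial.nthRoots e (1 : 𝕂)} :=
        (Polynomial.nthRoots e (1 : 𝕂)).finite_toSet.to_subtype
      exact Finite.of_injective _ ‹Function.Injective _›
    haveI := hfinT
    -- T is cyclic
    haveI hcycT : IsCyclic ↥T := by
      refine isCyclic_of_subgroup_isDomain (R := 𝕂)
        ((Units.coeHom 𝕂).comp (A.subtype.comp T.subtype)) ?_
      exact Units.val_injective.comp (A.subtype_injective.comp T.subtype_injective)
    -- exponent of T is e
    have hexpT : Monoid.exponent ↥T = e := by
      refine Nat.dvd_antisymm ?_ ?_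
      · exact Monoid.exponent_dvd_of_forall_pow_eq_one fun t => by
          exact Subtype.ext ((hmemT _).mp t.2)
      · -- e ∣ exponent T: every element of G ⧸ O has order dividing exponent T
        rw [he]
        refine Monoid.exponent_dvd_of_forall_pow_eq_one fun x => ?_
        induction x using QuotientGroup.induction_on with
        | H a =>
        rw [← QuotientGroup.mk_pow, QuotientGroup.eq_one_iff]
        refine Subgroup.mem_iInf.mpr fun φ => ?_
        rw [MonoidHom.mem_ker, map_pow]
        have hmem : φ a ∈ T := (hmemT _).mpr (hkey a φ)
        have := Monoid.pow_exponent_eq_one (⟨φ a, hmem⟩ : ↥T)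
        exact congrArg Subtype.val this
    -- element of A of order e
    obtain ⟨ζ, hζ⟩ := IsCyclic.exists_generator (α := ↥T)
    have hordζ : orderOf ζ = e := by
      rw [orderOf_eq_card_of_forall_mem_zpowers hζ, ← IsCyclic.exponent_eq_card, hexpT]
    have horda : orderOf ((ζ : ↥T) : ↥A) = e := by
      have h2 := orderOf_injective T.subtype T.subtype_injective ζ
      exact h2.trans hordζ
    -- HasEnoughRootsOfUnity for A
    haveI hfinR : Finite ↥(rootsOfUnity e ↥A) := by
      have hinj : Function.Injective
          (fun t : ↥(rootsOfUnity e ↥A) => (⟨(((((t : (↥A)ˣ) : ↥A) : 𝕂ˣ) : 𝕂)), by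
            rw [Polynomial.mem_nthRoots hepos]
            have ht : ((t : (↥A)ˣ)) ^ e = 1 := t.2
            have ht2 : (((t : (↥A)ˣ) : ↥A)) ^ e = 1 := by
              rw [← Units.val_pow_eq_pow_val, ht]; rfl
            have : ((((t : (↥A)ˣ) : ↥A) : 𝕂ˣ) : 𝕂) ^ e = 1 := by
              rw [← Units.val_pow_eq_pow_val, ← Subgroup.coe_pow, ht2]; simp
            exact this⟩ : {x : 𝕂 // x ∈ Polynomial.nthRoots e (1 : 𝕂)})) := by
        intro s t hst
        ext
        exact congrArg Subtype.val hst
      haveI : Finite {x : 𝕂 // x ∈ Polynomial.nthRoots e (1 : 𝕂)} :=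
        (Polynomial.nthRoots e (1 : 𝕂)).finite_toSet.to_subtype
      exact Finite.of_injective _ hinj
    haveI hEnough : HasEnoughRootsOfUnity ↥A e :=
      { prim := ⟨((ζ : ↥T) : ↥A), horda ▸ IsPrimitiveRoot.orderOf _⟩
        cyc := by
          refine isCyclic_of_subgroup_isDomain (R := 𝕂)
            ((Units.coeHom 𝕂).comp (A.subtype.comp
              ((Units.coeHom ↥A).comp (rootsOfUnity e ↥A).subtype))) ?_
          exact Units.val_injective.comp (A.subtype_injective.comp
            (Units.val_injective.comp (rootsOfUnity e ↥A).subtype_injective)) }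
    have hdvd : Monoid.exponent (G ⧸ M) ∣ e := by
      refine Monoid.exponent_dvd_of_forall_pow_eq_one fun x => ?_
      induction x using QuotientGroup.induction_on with
      | H a =>
      rw [← QuotientGroup.mk_pow, QuotientGroup.eq_one_iff]
      refine hOM ?_
      refine Subgroup.mem_iInf.mpr fun φ => ?_
      rw [MonoidHom.mem_ker, map_pow]
      exact hkey a φ
    haveI : HasEnoughRootsOfUnity ↥A (Monoid.exponent (G ⧸ M)) :=
      HasEnoughRootsOfUnity.of_dvd ↥A hdvd
    -- g is nontrivial in G ⧸ M
    have hgM : (g : G ⧸ M) ≠ 1 := by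
      intro hg1
      apply hcon
      have hgM2 : g ∈ M := (QuotientGroup.eq_one_iff g).mp hg1
      have hgset : g ∈ (K : Set G) * (O : Set G) := by
        rw [← Subgroup.mul_normal K O]; exact hgM2
      obtain ⟨k, hk, o, ho, hko⟩ := hgset
      exact ⟨k, hk, by rw [← hko]; simpa using ho⟩
    obtain ⟨χ, hχ⟩ :=
      CommGroup.exists_apply_ne_one_of_hasEnoughRootsOfUnity (G ⧸ M) ↥A hgM
    set φ : G →* ↥A := ((Units.coeHom ↥A).comp χ).comp (QuotientGroup.mk' M) with hφ
    have htriv : ∀ k ∈ K, φ k = 1 := by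
      intro k hk
      have : (k : G ⧸ M) = 1 := (QuotientGroup.eq_one_iff k).mpr (le_sup_left (α := Subgroup G) hk)
      simp [hφ, QuotientGroup.mk'_apply, this]
    have := h φ htriv
    apply hχ
    have hφg : φ g = ((χ (g : G ⧸ M) : (↥A)ˣ) : ↥A) := rfl
    have : φ g = 1 := by
      have h1 : ((φ g : ↥A) : 𝕂ˣ) = 1 := this
      exact Subtype.ext h1
    rw [hφg] at this
    exact Units.ext this
  · rintro ⟨k, hk, hko⟩ φ hφ
    have hgk : g = k * (k⁻¹ * g) := by group
    rw [hgk, map_mul, hφ k hk, one_mul]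
    have := Subgroup.mem_iInf.mp hko φ
    rw [MonoidHom.mem_ker] at this
    rw [this]
    simp
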